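/- Let n ≥ 1 and W : (Fin n → ℝ⁴) → ℂ. Define H : ℝ → ℂ by H(t) = 1 if t > 0 and H(t) = 0 otherwise, and define τ : (Fin n → ℝ⁴) → ℂ by τ(x) := Σ_{P ∈ Perm(Fin n)} ( ∏_{k=1}^{n−1} H( (x_{P(k)})₀ − (x_{P(k+1)})₀ ) ) · W(x ∘ P). Assume: (i) W is invariant under the restricted Lorentz group, i.e. W(Λ·x₁, …, Λ·xₙ) = W(x₁, …, xₙ) for all Λ ∈ L₊↑; (ii) τ(Λ·x₁, …, Λ·xₙ) = τ(x₁, …, xₙ) for every Λ ∈ L₊↑ and every configuration (x₁,…,xₙ) such that both (x₁,…,xₙ) and (Λ·x₁,…,Λ·xₙ) have pairwise distinct time components. Let (x₁,…,xₙ) satisfy (x₁)₀ > (x₂)₀ > … > (xₙ)₀ and suppose there exists Λ ∈ L₊↑ with (Λ·x₁)₀ < (Λ·x₂)₀ < … < (Λ·xₙ)₀. Then weak local commutativity holds at (x₁,…,xₙ): W(x₁, x₂, …, xₙ) = W(xₙ, …, x₂, x₁). -/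

import Mathlib

/-- The Minkowski metric matrix `G = diag(1, −1, −1, −1)`. -/
def minkMetric : Matrix (Fin 4) (Fin 4) ℝ := Matrix.diagonal ![1, -1, -1, -1]

/-- A matrix belongs to the restricted Lorentz group `L₊↑` if `Λᵀ G Λ = G`,
`det Λ = 1` and `Λ₀₀ ≥ 1`. -/
def IsRestrictedLorentz (Λ : Matrix (Fin 4) (Fin 4) ℝ) : Prop :=
  Λ.transpose * minkMetric * Λ = minkMetric ∧ Λ.det = 1 ∧ 1 ≤ Λ 0 0


private lemma chain_aux {n : ℕ} (g : Fin n → ℝ)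
    (h : ∀ k : ℕ, ∀ hk : k + 1 < n, g ⟨k + 1, hk⟩ < g ⟨k, by omega⟩) :
    ∀ a b : Fin n, a < b → g b < g a := by
  intro a b hab
  obtain ⟨b, hb⟩ := b
  induction b with
  | zero => exact absurd hab (by simp [Fin.lt_def])
  | succ m ih =>
    have hm : m < n := by omega
    have hstep : g ⟨m + 1, hb⟩ < g ⟨m, hm⟩ := h m hb
    rcases Nat.lt_or_ge a.1 m with h1 | h2
    · exact hstep.trans (ih hm (by simpa [Fin.lt_def] using h1))
    · have : a.1 = m := by
        have := hab; simp [Fin.lt_def] at this; omega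
      have : a = ⟨m, hm⟩ := Fin.ext this
      rw [this]; exact hstep

private lemma tau_eq_W (n : ℕ)
    (W : (Fin n → (Fin 4 → ℝ)) → ℂ)
    (τ : (Fin n → (Fin 4 → ℝ)) → ℂ)
    (hτ : ∀ x : Fin n → (Fin 4 → ℝ), τ x =
      ∑ P : Equiv.Perm (Fin n),
        (∏ i : Fin (n - 1),
          (if 0 < (x (P (Fin.castLE (Nat.sub_le n 1) i))) 0
                - (x (P ⟨i.1 + 1, by have := i.2; omega⟩)) 0
            then (1 : ℂ) else 0)) * W (x ∘ ⇑P))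
    (z : Fin n → (Fin 4 → ℝ)) (σ : Equiv.Perm (Fin n))
    (hz : ∀ i j : Fin n, i < j → (z (σ j)) 0 < (z (σ i)) 0) :
    τ z = W (z ∘ ⇑σ) := by
  rw [hτ z]
  rw [Finset.sum_eq_single σ]
  · have hprod : (∏ i : Fin (n - 1),
        (if 0 < (z (σ (Fin.castLE (Nat.sub_le n 1) i))) 0
              - (z (σ ⟨i.1 + 1, by have := i.2; omega⟩)) 0
          then (1 : ℂ) else 0)) = 1 := by
      apply Finset.prod_eq_one
      intro i _
      rw [if_pos]
      have hlt : (Fin.castLE (Nat.sub_le n 1) i)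
          < (⟨i.1 + 1, by have := i.2; omega⟩ : Fin n) := by
        simp [Fin.lt_def]
      have := hz _ _ hlt
      linarith
    rw [hprod, one_mul]
  · intro P _ hPσ
    by_contra hne
    have hprodne := left_ne_zero_of_mul hne
    have hall : ∀ i : Fin (n - 1),
        0 < (z (P (Fin.castLE (Nat.sub_le n 1) i))) 0
            - (z (P ⟨i.1 + 1, by have := i.2; omega⟩)) 0 := by
      intro i
      by_contra h
      exact hprodne (Finset.prod_eq_zero (Finset.mem_univ i) (if_neg h))
    have hchain : ∀ a b : Fin n, a < b → (z (P b)) 0 < (z (P a)) 0 := by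
      apply chain_aux (fun i => (z (P i)) 0)
      intro k hk
      have hk1 : k < n - 1 := by omega
      have := hall ⟨k, hk1⟩
      simp only [Fin.castLE] at this
      linarith
    have hmono : StrictMono (fun i => σ.symm (P i)) := by
      intro a b hab
      have h1 := hchain a b hab
      rcases lt_trichotomy (σ.symm (P a)) (σ.symm (P b)) with h | h | h
      · exact h
      · exact absurd (P.injective (σ.symm.injective h)) hab.ne
      · have := hz _ _ h
        simp only [Equiv.apply_symm_apply] at this
        linarith
    exfalso
    apply hPσ
    have hQ : ∀ i : Fin n, σ.symm (P i) = i := by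
      have key := Subsingleton.elim
        (StrictMono.orderIsoOfSurjective (fun i => σ.symm (P i)) hmono
          ((P.trans σ.symm).surjective))
        (OrderIso.refl (Fin n))
      intro i
      have : (StrictMono.orderIsoOfSurjective (fun i => σ.symm (P i)) hmono
          ((P.trans σ.symm).surjective)) i = (OrderIso.refl (Fin n)) i := by
        rw [key]
      exact this
    exact Equiv.ext fun i => (Equiv.symm_apply_eq σ).mp (hQ i)
  · intro h
    exact absurd (Finset.mem_univ σ) h

/-- **Weak local commutativity from Lorentz invariance of the τ- and
W-functions.** Let `τ` be the time-ordered function built from the `n`-point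
function `W` by summing the Heaviside-ordered permutations, `W` Lorentz
invariant, and `τ` Lorentz invariant on configurations with pairwise distinct
time components. If `(x₁,…,xₙ)` has strictly decreasing time components and
some restricted Lorentz transformation makes its time components strictly
increasing, then `W(x₁,…,xₙ) = W(xₙ,…,x₁)`. -/
theorem weak_local_commutativity
    (n : ℕ) (hn : 1 ≤ n)
    (W : (Fin n → (Fin 4 → ℝ)) → ℂ)
    (τ : (Fin n → (Fin 4 → ℝ)) → ℂ)
    (hτ : ∀ x : Fin n → (Fin 4 → ℝ), τ x =
      ∑ P : Equiv.Perm (Fin n),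
        (∏ i : Fin (n - 1),
          (if 0 < (x (P (Fin.castLE (Nat.sub_le n 1) i))) 0
                - (x (P ⟨i.1 + 1, by have := i.2; omega⟩)) 0
            then (1 : ℂ) else 0)) * W (x ∘ ⇑P))
    (hW : ∀ Λ : Matrix (Fin 4) (Fin 4) ℝ, IsRestrictedLorentz Λ →
      ∀ x : Fin n → (Fin 4 → ℝ), W (fun i => Λ.mulVec (x i)) = W x)
    (hτinv : ∀ Λ : Matrix (Fin 4) (Fin 4) ℝ, IsRestrictedLorentz Λ →
      ∀ x : Fin n → (Fin 4 → ℝ),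
        (∀ i j : Fin n, i ≠ j → (x i) 0 ≠ (x j) 0) →
        (∀ i j : Fin n, i ≠ j → (Λ.mulVec (x i)) 0 ≠ (Λ.mulVec (x j)) 0) →
        τ (fun i => Λ.mulVec (x i)) = τ x)
    (x : Fin n → (Fin 4 → ℝ))
    (hx : ∀ i j : Fin n, i < j → (x j) 0 < (x i) 0)
    (hΛ : ∃ Λ : Matrix (Fin 4) (Fin 4) ℝ, IsRestrictedLorentz Λ ∧
      ∀ i j : Fin n, i < j → (Λ.mulVec (x i)) 0 < (Λ.mulVec (x j)) 0) :
    W x = W (x ∘ Fin.rev) := by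
  obtain ⟨Λ, hLor, hinc⟩ := hΛ
  set y : Fin n → (Fin 4 → ℝ) := fun i => Λ.mulVec (x i) with hy
  have h1 : τ x = W x := by
    have := tau_eq_W n W τ hτ x 1 (by
      intro i j hij
      simpa using hx i j hij)
    simpa using this
  have h2 : τ y = W (y ∘ ⇑(Fin.revPerm (n := n))) := by
    apply tau_eq_W n W τ hτ y Fin.revPerm
    intro i j hij
    simp only [Fin.revPerm_apply]
    exact hinc (Fin.rev j) (Fin.rev i) (Fin.rev_lt_rev.mpr hij)
  have hdx : ∀ i j : Fin n, i ≠ j → (x i) 0 ≠ (x j) 0 := by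
    intro i j hij
    rcases hij.lt_or_gt with h | h
    · exact (hx i j h).ne'
    · exact (hx j i h).ne
  have hdy : ∀ i j : Fin n, i ≠ j → (Λ.mulVec (x i)) 0 ≠ (Λ.mulVec (x j)) 0 := by
    intro i j hij
    rcases hij.lt_or_gt with h | h
    · exact (hinc i j h).ne
    · exact (hinc j i h).ne'
  have h3 : τ y = τ x := hτinv Λ hLor x hdx hdy
  have h4 : W (y ∘ ⇑(Fin.revPerm (n := n))) = W (x ∘ Fin.rev) := by
    have : (y ∘ ⇑(Fin.revPerm (n := n))) = fun i => Λ.mulVec ((x ∘ Fin.rev) i) := by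
      funext i; simp [hy]
    rw [this]
    exact hW Λ hLor (x ∘ Fin.rev)
  rw [← h1, ← h3, h2, h4]
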